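/- For any two-qubit density matrix ρ, A_2(ρ) ≤ 3, i.e. Σ_{a,b∈{x,y,z}} Tr((σ_a ⊗ σ_b) ρ)² ≤ 3. -/

import Mathlib

open Matrix BigOperators Finset ComplexOrder

/-- The Pauli matrices, indexed by `Fin 4`: identity, X, Y, Z. -/
noncomputable def pauli : Fin 4 → Matrix (Fin 2) (Fin 2) ℂ
  | 0 => 1
  | 1 => !![0, 1; 1, 0]
  | 2 => !![0, -Complex.I; Complex.I, 0]
  | 3 => !![1, 0; 0, -1]

/-- An `n`-qubit Pauli word: the tensor product of the Pauli matrices `pauli (w i)`,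
realized as a matrix indexed by `Fin n → Fin 2`. -/
noncomputable def pWord {n : ℕ} (w : Fin n → Fin 4) :
    Matrix (Fin n → Fin 2) (Fin n → Fin 2) ℂ :=
  Matrix.of fun x y => ∏ i, pauli (w i) (x i) (y i)

/-- The weight of a Pauli word: the number of non-identity tensor factors. -/
def wt {n : ℕ} (w : Fin n → Fin 4) : ℕ :=
  (Finset.univ.filter fun i => w i ≠ 0).card

/-- The `k`-th sector length of an `n`-qubit matrix:
the sum of squared Pauli expectation values over Pauli words of weight `k`. -/
noncomputable def sector (n k : ℕ) (ρ : Matrix (Fin n → Fin 2) (Fin n → Fin 2) ℂ) : ℝ :=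
  ∑ w ∈ Finset.univ.filter fun w : Fin n → Fin 4 => wt w = k,
    ((pWord w * ρ).trace.re) ^ 2

/-- An `n`-qubit quantum state: positive semidefinite with unit trace. -/
def IsState {n : ℕ} (ρ : Matrix (Fin n → Fin 2) (Fin n → Fin 2) ℂ) : Prop :=
  ρ.PosSemidef ∧ ρ.trace = 1

/-- Sum over functions `Fin 2 → α` as a double sum. -/
lemma aux_sum_pi2 {α : Type*} {M : Type*} [Fintype α] [AddCommMonoid M]
    (f : (Fin 2 → α) → M) : ∑ x, f x = ∑ a, ∑ b, f ![a, b] := by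
  rw [← (piFinTwoEquiv (fun _ => α)).symm.sum_comp, Fintype.sum_prod_type]
  exact Finset.sum_congr rfl fun a _ => Finset.sum_congr rfl fun b _ => by congr 1

set_option maxHeartbeats 3200000 in
/-- Pauli orthogonality: the sum of `|Tr(P_w ρ)|²` over all 16 two-qubit Pauli
words equals `4 ∑ |ρ_{xy}|²`. -/
lemma aux_pauli_parseval (ρ : Matrix (Fin 2 → Fin 2) (Fin 2 → Fin 2) ℂ) :
    ∑ w : Fin 2 → Fin 4, Complex.normSq (pWord w * ρ).trace
      = 4 * ∑ x : Fin 2 → Fin 2, ∑ y : Fin 2 → Fin 2, Complex.normSq (ρ x y) := by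
  rw [aux_sum_pi2 (f := fun w => Complex.normSq (pWord w * ρ).trace), aux_sum_pi2]
  simp only [aux_sum_pi2 (f := fun y => Complex.normSq (ρ _ y))]
  simp only [Matrix.trace, Matrix.diag, Matrix.mul_apply]
  simp only [aux_sum_pi2 (f := fun x => ∑ y : Fin 2 → Fin 2, pWord _ x y * ρ y x)]
  simp only [aux_sum_pi2 (f := fun y => pWord _ _ y * ρ y _)]
  simp only [pWord, Matrix.of_apply, Fin.prod_univ_two]
  simp only [Fin.sum_univ_four, Fin.sum_univ_two, Matrix.cons_val_zero, Matrix.cons_val_one,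
    Matrix.head_cons]
  simp only [pauli, Matrix.one_apply, Matrix.cons_val', Matrix.cons_val_zero, Matrix.cons_val_one,
    Matrix.head_cons, Matrix.empty_val', Matrix.cons_val_fin_one, Matrix.head_fin_const]
  norm_num
  simp only [Complex.normSq_apply, Complex.add_re, Complex.add_im, Complex.mul_re, Complex.mul_im,
    Complex.I_re, Complex.I_im, Complex.neg_re, Complex.neg_im, Complex.one_re, Complex.one_im,
    Complex.zero_re, Complex.zero_im, Complex.sub_re, Complex.sub_im]
  ring

/-- The all-identity Pauli word is the identity matrix. -/
lemma aux_pWord_zero : pWord (![0, 0] : Fin 2 → Fin 4) = 1 := by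
  ext x y
  simp only [pWord, Matrix.of_apply, Fin.prod_univ_two, Matrix.cons_val_zero, Matrix.cons_val_one,
    Matrix.head_cons]
  simp only [pauli, Matrix.one_apply]
  by_cases h0 : x 0 = y 0 <;> by_cases h1 : x 1 = y 1 <;>
    simp [h0, h1, funext_iff, Fin.forall_fin_two]

/-- For Hermitian `ρ`, `Tr(ρ²) = ∑ |ρ_{xy}|²`. -/
lemma aux_trace_sq {n : Type*} [Fintype n] [DecidableEq n] (ρ : Matrix n n ℂ)
    (hH : ρ.IsHermitian) :
    (ρ * ρ).trace = ∑ x, ∑ y, (Complex.normSq (ρ x y) : ℂ) := by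
  rw [Matrix.trace]
  simp only [Matrix.diag, Matrix.mul_apply]
  refine Finset.sum_congr rfl fun x _ => Finset.sum_congr rfl fun y _ => ?_
  have h : ρ y x = (starRingEnd ℂ) (ρ x y) := by
    have := congrFun (congrFun hH y) x
    simpa [Matrix.conjTranspose_apply] using this.symm
  rw [h, Complex.mul_conj]

/-- Purity bound: `Tr(ρ²) ≤ 1` for a state. -/
lemma aux_purity_le_one {n : ℕ} (ρ : Matrix (Fin n → Fin 2) (Fin n → Fin 2) ℂ)
    (hρ : IsState ρ) : (ρ * ρ).trace.re ≤ 1 := by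
  obtain ⟨hpsd, htr⟩ := hρ
  have hH := hpsd.1
  have hspec := hH.spectral_theorem
  rw [Unitary.conjStarAlgAut_apply] at hspec
  set U : Matrix (Fin n → Fin 2) (Fin n → Fin 2) ℂ :=
    (Matrix.IsHermitian.eigenvectorUnitary hH : Matrix (Fin n → Fin 2) (Fin n → Fin 2) ℂ) with hU
  have hUU : star U * U = 1 :=
    Matrix.mem_unitaryGroup_iff'.mp (Matrix.IsHermitian.eigenvectorUnitary hH).2
  have htrD : ∀ d : (Fin n → Fin 2) → ℂ, (U * Matrix.diagonal d * star U).trace = ∑ i, d i := by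
    intro d
    rw [Matrix.trace_mul_cycle, hUU, Matrix.one_mul, Matrix.trace_diagonal]
  have h1 : (1 : ℂ) = ∑ i, (hH.eigenvalues i : ℂ) := by
    rw [← htr]
    conv_lhs => rw [hspec]
    exact htrD _
  have h2 : (ρ * ρ).trace = ∑ i, ((hH.eigenvalues i : ℂ) * (hH.eigenvalues i : ℂ)) := by
    conv_lhs => rw [hspec]
    have heq : (U * Matrix.diagonal (RCLike.ofReal ∘ hH.eigenvalues) * star U) *
        (U * Matrix.diagonal (RCLike.ofReal ∘ hH.eigenvalues) * star U)
        = U * Matrix.diagonal (fun i => (hH.eigenvalues i : ℂ) * (hH.eigenvalues i : ℂ))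
          * star U := by
      simp only [Matrix.mul_assoc]
      rw [← Matrix.mul_assoc (star U) U, hUU, Matrix.one_mul,
        ← Matrix.mul_assoc (Matrix.diagonal (RCLike.ofReal ∘ hH.eigenvalues)),
        Matrix.diagonal_mul_diagonal]
      rfl
    rw [heq, htrD]
  have hev : ∀ i, 0 ≤ hH.eigenvalues i := hpsd.eigenvalues_nonneg
  have h1' : ∑ i, hH.eigenvalues i = 1 := by
    have := h1
    push_cast at this
    exact_mod_cast this.symm
  have h2' : (ρ * ρ).trace.re = ∑ i, (hH.eigenvalues i) ^ 2 := by
    rw [h2, Complex.re_sum]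
    simp [sq]
  rw [h2']
  calc ∑ i, (hH.eigenvalues i) ^ 2 ≤ ∑ i, hH.eigenvalues i := by
        refine Finset.sum_le_sum fun i _ => ?_
        have hle : hH.eigenvalues i ≤ 1 := by
          rw [← h1']
          exact Finset.single_le_sum (fun j _ => hev j) (Finset.mem_univ i)
        nlinarith [hev i]
    _ = 1 := h1'

/-- Every two-qubit density matrix satisfies `A₂(ρ) ≤ 3`. -/
theorem two_qubit_A2_le_three (ρ : Matrix (Fin 2 → Fin 2) (Fin 2 → Fin 2) ℂ)
    (hρ : IsState ρ) : sector 2 2 ρ ≤ 3 := by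
  have hkey := aux_pauli_parseval ρ
  -- `4 ∑ |ρ_{xy}|² ≤ 4`
  have htr2 : 4 * (∑ x : Fin 2 → Fin 2, ∑ y : Fin 2 → Fin 2, Complex.normSq (ρ x y)) ≤ 4 := by
    have hp := aux_purity_le_one ρ hρ
    have he := aux_trace_sq ρ hρ.1.1
    have hre : (ρ * ρ).trace.re
        = ∑ x : Fin 2 → Fin 2, ∑ y : Fin 2 → Fin 2, Complex.normSq (ρ x y) := by
      rw [he, Complex.re_sum]
      simp [Complex.re_sum]
    linarith
  -- `re² ≤ normSq` termwise
  have hle : ∑ w : Fin 2 → Fin 4, ((pWord w * ρ).trace.re) ^ 2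
      ≤ ∑ w : Fin 2 → Fin 4, Complex.normSq (pWord w * ρ).trace := by
    refine Finset.sum_le_sum fun w _ => ?_
    rw [Complex.normSq_apply, sq]
    nlinarith [mul_self_nonneg ((pWord w * ρ).trace.im)]
  -- the weight-0 term contributes exactly 1
  have hone : ((pWord (![0, 0] : Fin 2 → Fin 4) * ρ).trace.re) ^ 2 = 1 := by
    rw [aux_pWord_zero, Matrix.one_mul, hρ.2]
    norm_num
  have hmem : (![0, 0] : Fin 2 → Fin 4)
      ∈ Finset.univ.filter (fun w : Fin 2 → Fin 4 => ¬ wt w = 2) := by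
    refine Finset.mem_filter.mpr ⟨Finset.mem_univ _, ?_⟩
    decide
  have hstep : sector 2 2 ρ + 1 ≤ ∑ w : Fin 2 → Fin 4, ((pWord w * ρ).trace.re) ^ 2 := by
    rw [← Finset.sum_filter_add_sum_filter_not Finset.univ (fun w : Fin 2 → Fin 4 => wt w = 2)
      (fun w => ((pWord w * ρ).trace.re) ^ 2)]
    refine add_le_add le_rfl ?_
    calc (1 : ℝ) = ((pWord (![0, 0] : Fin 2 → Fin 4) * ρ).trace.re) ^ 2 := hone.symm
      _ ≤ _ := Finset.single_le_sum
          (f := fun w : Fin 2 → Fin 4 => ((pWord w * ρ).trace.re) ^ 2)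
          (fun w _ => sq_nonneg _) hmem
  linarith
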